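/- Let n = p_1⋯p_r·m where the p_i are distinct primes not dividing m. Suppose every sequence of length t over the set of elements of ℤ/nℤ coprime to each p_i contains a nonempty subsequence whose product is idempotent. Then every sequence of length t over ℤ/nℤ contains a nonempty subsequence whose product is idempotent. -/

import Mathlib

theorem stmt10 (r m t : ℕ) (hm : 0 < m) (p : Fin r → ℕ) (hp : ∀ i, (p i).Prime)
    (hinj : Function.Injective p) (hpm : ∀ i, ¬ p i ∣ m) (n : ℕ)
    (hn : n = (∏ i, p i) * m)
    (H : ∀ f : Fin t → ZMod n, (∀ j, ∀ i, Nat.Coprime ((f j).val) (p i)) →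
      ∃ T : Finset (Fin t), T.Nonempty ∧
        (∏ i ∈ T, f i) * (∏ i ∈ T, f i) = ∏ i ∈ T, f i) :
    ∀ f : Fin t → ZMod n, ∃ T : Finset (Fin t), T.Nonempty ∧
      (∏ i ∈ T, f i) * (∏ i ∈ T, f i) = ∏ i ∈ T, f i := by
  intro f
  have hn0 : 0 < n := by
    rw [hn]
    exact Nat.mul_pos (Finset.prod_pos (fun i _ => (hp i).pos)) hm
  haveI : NeZero n := ⟨hn0.ne'⟩
  have hdvd_p : ∀ i, p i ∣ n := fun i => by
    rw [hn]; exact Dvd.dvd.mul_right (Finset.dvd_prod_of_mem p (Finset.mem_univ i)) m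
  have hdvd_m : m ∣ n := by rw [hn]; exact dvd_mul_left m _
  set c : Fin t → ℕ :=
    fun j => (∏ i ∈ Finset.univ.filter (fun i => ¬ p i ∣ (f j).val), p i) * m with hc
  set g : Fin t → ZMod n := fun j => f j + (c j : ZMod n) with hg
  let π : ∀ i : Fin r, ZMod n →+* ZMod (p i) := fun i => ZMod.castHom (hdvd_p i) _
  let ρ : ZMod n →+* ZMod m := ZMod.castHom hdvd_m _
  -- key equivalence
  have keyA : ∀ (i : Fin r) (x : ZMod n), π i x = 0 ↔ p i ∣ x.val := by
    intro i x
    have : π i x = ((x.val : ℕ) : ZMod (p i)) := by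
      simp [π, ZMod.natCast_val, ZMod.castHom_apply]
    rw [this, ZMod.natCast_eq_zero_iff]
  have keyM : ∀ x : ZMod n, ρ x = ((x.val : ℕ) : ZMod m) := by
    intro x; simp [ρ, ZMod.natCast_val, ZMod.castHom_apply]
  -- divisibility facts about c
  have hcdvd : ∀ j i, ¬ p i ∣ (f j).val → p i ∣ c j := by
    intro j i hi
    exact Dvd.dvd.mul_right
      (Finset.dvd_prod_of_mem p (Finset.mem_filter.mpr ⟨Finset.mem_univ i, hi⟩)) m
  have hcndvd : ∀ j i, p i ∣ (f j).val → ¬ p i ∣ c j := by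
    intro j i hi hdiv
    rcases ((hp i).prime.dvd_mul).mp hdiv with h1 | h2
    · rcases (Prime.dvd_finset_prod_iff (hp i).prime p).mp h1 with ⟨i', hi', hdd⟩
      have : i = i' := hinj (((Nat.prime_dvd_prime_iff_eq (hp i) (hp i')).mp hdd))
      subst this
      exact (Finset.mem_filter.mp hi').2 hi
    · exact hpm i h2
  -- π i (g j)
  have hπg : ∀ (i : Fin r) (j : Fin t), π i (g j) = π i (f j) + ((c j : ℕ) : ZMod (p i)) := by
    intro i j; simp [hg, map_add, map_natCast]
  have hcop : ∀ j i, Nat.Coprime ((g j).val) (p i) := by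
    intro j i
    rw [Nat.coprime_comm]
    rw [(hp i).coprime_iff_not_dvd]
    rw [← keyA i (g j)]
    by_cases hfi : p i ∣ (f j).val
    · rw [hπg, (keyA i (f j)).mpr hfi, zero_add]
      intro h0
      exact hcndvd j i hfi ((ZMod.natCast_eq_zero_iff _ _).mp h0)
    · rw [hπg, (ZMod.natCast_eq_zero_iff _ _).mpr (hcdvd j i hfi), add_zero]
      intro h0
      exact hfi ((keyA i (f j)).mp h0)
  obtain ⟨T, hTne, hidem⟩ := H g hcop
  refine ⟨T, hTne, ?_⟩
  set x : ZMod n := ∏ j ∈ T, f j with hx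
  set y : ZMod n := ∏ j ∈ T, g j with hy
  -- idempotency at each prime
  have hπx : ∀ i, π i x * π i x = π i x := by
    intro i
    by_cases hzero : ∃ j ∈ T, p i ∣ (f j).val
    · obtain ⟨j, hj, hdj⟩ := hzero
      have : π i x = 0 := by
        rw [hx, map_prod]
        exact Finset.prod_eq_zero hj ((keyA i (f j)).mpr hdj)
      rw [this]; ring
    · push_neg at hzero
      have hxy : π i x = π i y := by
        rw [hx, hy, map_prod, map_prod]
        refine Finset.prod_congr rfl (fun j hj => ?_)
        rw [hπg, (ZMod.natCast_eq_zero_iff _ _).mpr (hcdvd j i (hzero j hj)), add_zero]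
      rw [hxy, ← map_mul, hidem]
  have hρx : ρ x * ρ x = ρ x := by
    have hxy : ρ x = ρ y := by
      rw [hx, hy, map_prod, map_prod]
      refine Finset.prod_congr rfl (fun j hj => ?_)
      have : ((c j : ℕ) : ZMod m) = 0 :=
        (ZMod.natCast_eq_zero_iff _ _).mpr (dvd_mul_left m _)
      simp [hg, map_add, map_natCast, this]
    rw [hxy, ← map_mul, hidem]
  -- conclude
  set z : ZMod n := x * x - x with hz
  have hπz : ∀ i, p i ∣ z.val := by
    intro i
    rw [← keyA]
    rw [hz, map_sub, map_mul, hπx, sub_self]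
  have hρz : m ∣ z.val := by
    have : ρ z = 0 := by rw [hz, map_sub, map_mul, hρx, sub_self]
    rw [keyM] at this
    exact (ZMod.natCast_eq_zero_iff _ _).mp this
  have hprod : (∏ i, p i) ∣ z.val := by
    have himg : ∏ i, p i = ∏ q ∈ Finset.univ.image p, q := by
      rw [Finset.prod_image (fun a _ b _ h => hinj h)]
    rw [himg]
    refine Finset.prod_primes_dvd _ (fun q hq => ?_) (fun q hq => ?_)
    · obtain ⟨i, _, rfl⟩ := Finset.mem_image.mp hq
      exact (hp i).prime
    · obtain ⟨i, _, rfl⟩ := Finset.mem_image.mp hq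
      exact hπz i
  have hcoprime : Nat.Coprime (∏ i, p i) m :=
    Nat.Coprime.prod_left (fun i _ => ((hp i).coprime_iff_not_dvd).mpr (hpm i))
  have hndvd : n ∣ z.val := by
    have := Nat.Coprime.mul_dvd_of_dvd_of_dvd hcoprime hprod hρz
    rwa [← hn] at this
  have hzval : z.val = 0 := Nat.eq_zero_of_dvd_of_lt hndvd (ZMod.val_lt z)
  have : z = 0 := by
    rwa [← ZMod.val_eq_zero]
  have := sub_eq_zero.mp this
  exact this
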